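/- Completeness of L^A_CS with respect to subset models: let L^A be a logic (consisting of cl, j, j+ together with some subset of {j4, jd, jt}) and CS a constant specification, where CS is required to be axiomatically appropriate in case jd ∈ L^A. Then for every formula F ∈ L_J^A, if M, Γ ⊩ F for all L^A_CS-subset models M and all Γ ∈ W0, then L^A_CS ⊢ F. -/

import Mathlib

/-- Justification terms `Tm^A`: constants `c_i`, variables `x_i`, application
`·`, sum `+` and `!`. -/
inductive TmA : Type
  | const : ℕ → TmA
  | var : ℕ → TmA
  | app : TmA → TmA → TmA
  | plus : TmA → TmA → TmA
  | bang : TmA → TmA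

/-- Formulas of `L_J^A`: atomic propositions, `⊥`, implication and `t:F`. -/
inductive FmlA : Type
  | atom : ℕ → FmlA
  | bot : FmlA
  | imp : FmlA → FmlA → FmlA
  | just : TmA → FmlA → FmlA

namespace FmlA
/-- `¬A := A → ⊥`. -/
def neg (A : FmlA) : FmlA := A.imp .bot
/-- `A ∨ B := ¬A → B`. -/
def or' (A B : FmlA) : FmlA := A.neg.imp B
/-- `A ∧ B := ¬(A → ¬B)`. -/
def and' (A B : FmlA) : FmlA := (A.imp B.neg).neg
end FmlA

/-- Which of the optional axioms j4, jd, jt belong to the logic `L^A`. -/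
structure FlagsA : Type where
  j4 : Bool
  jd : Bool
  jt : Bool

/-- The axioms of the logic `L^A`: classical propositional axioms, j, j+,
together with the optional axioms j4, jd, jt as given by the flags. -/
inductive AAxiom (fl : FlagsA) : FmlA → Prop
  | cl1 (A B : FmlA) : AAxiom fl (A.imp (B.imp A))
  | cl2 (A B C : FmlA) :
      AAxiom fl ((A.imp (B.imp C)).imp ((A.imp B).imp (A.imp C)))
  | cl3 (A : FmlA) : AAxiom fl (A.neg.neg.imp A)
  | j (s t : TmA) (A B : FmlA) :
      AAxiom fl ((FmlA.just s (A.imp B)).imp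
        ((FmlA.just t A).imp (FmlA.just (s.app t) B)))
  | jplus (s t : TmA) (A : FmlA) :
      AAxiom fl (((FmlA.just s A).or' (FmlA.just t A)).imp
        (FmlA.just (s.plus t) A))
  | j4 (t : TmA) (A : FmlA) (h : fl.j4 = true) :
      AAxiom fl ((FmlA.just t A).imp (FmlA.just t.bang (FmlA.just t A)))
  | jd (t : TmA) (h : fl.jd = true) :
      AAxiom fl ((FmlA.just t FmlA.bot).imp FmlA.bot)
  | jt (t : TmA) (A : FmlA) (h : fl.jt = true) :
      AAxiom fl ((FmlA.just t A).imp A)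

/-- `bangIterA n t = !…!t` with `n` occurrences of `!`. -/
def bangIterA : ℕ → TmA → TmA
  | 0, t => t
  | n + 1, t => (bangIterA n t).bang

/-- `anFmlA c A n = !…!c : !…!c : … : !c : c : A` (with `n, n-1, …, 1, 0` bangs). -/
def anFmlA (c : TmA) (A : FmlA) : ℕ → FmlA
  | 0 => FmlA.just c A
  | n + 1 => FmlA.just (bangIterA (n + 1) c) (anFmlA c A n)

/-- A constant specification for `L^A`: a set of pairs `(c, A)` where `c` is a
constant and `A` an axiom of `L^A`. -/
def IsCSA (fl : FlagsA) (CS : Set (ℕ × FmlA)) : Prop :=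
  ∀ p ∈ CS, AAxiom fl p.2

/-- `CS` is axiomatically appropriate: every axiom has a constant justifying it. -/
def AxAppropriateA (fl : FlagsA) (CS : Set (ℕ × FmlA)) : Prop :=
  ∀ A : FmlA, AAxiom fl A → ∃ c : ℕ, (c, A) ∈ CS

/-- Hilbert-style derivability in `L^A_CS`: axioms of `L^A`, modus ponens, and
axiom necessitation. -/
inductive DerivA (fl : FlagsA) (CS : Set (ℕ × FmlA)) : FmlA → Prop
  | ax {A : FmlA} : AAxiom fl A → DerivA fl CS A
  | mp {A B : FmlA} : DerivA fl CS (A.imp B) → DerivA fl CS A → DerivA fl CS B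
  | an {c : ℕ} {A : FmlA} (n : ℕ) (h : (c, A) ∈ CS) :
      DerivA fl CS (anFmlA (TmA.const c) A n)

/-- An `L^A_CS`-subset model `(W, W0, V, E)`; `V ω F` encodes `V(ω,F) = 1`. -/
structure AModel (fl : FlagsA) (CS : Set (ℕ × FmlA)) (W : Type*) : Type _ where
  W0 : Set W
  V : W → FmlA → Prop
  E : W → TmA → Set W
  w0_nonempty : W0.Nonempty
  v_bot : ∀ ω ∈ W0, ¬ V ω FmlA.bot
  v_imp : ∀ ω ∈ W0, ∀ F G : FmlA, V ω (F.imp G) ↔ (¬ V ω F ∨ V ω G)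
  v_just : ∀ ω ∈ W0, ∀ (t : TmA) (F : FmlA),
      V ω (FmlA.just t F) ↔ E ω t ⊆ {υ | V υ F}
  e_plus : ∀ ω ∈ W0, ∀ s t : TmA, E ω (s.plus t) ⊆ E ω s ∩ E ω t
  e_app : ∀ ω ∈ W0, ∀ s t : TmA,
      E ω (s.app t) ⊆ {υ | ∀ F : FmlA,
        (∃ H : FmlA, E ω s ⊆ {x | V x (H.imp F)} ∧ E ω t ⊆ {x | V x H}) →
          V υ F}
  e_jd : fl.jd = true → ∀ ω ∈ W0, ∀ t : TmA, ∃ υ ∈ W0, υ ∈ E ω t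
  e_jt : fl.jt = true → ∀ ω ∈ W0, ∀ t : TmA, ω ∈ E ω t
  e_j4 : fl.j4 = true → ∀ ω ∈ W0, ∀ t : TmA,
      E ω t.bang ⊆ {υ | ∀ F : FmlA, V ω (FmlA.just t F) → V υ (FmlA.just t F)}
  e_cs : ∀ ω ∈ W0, ∀ (c : ℕ) (A : FmlA), (c, A) ∈ CS →
      E ω (TmA.const c) ⊆ {υ | V υ A}
  e_cs_bang : ∀ ω ∈ W0, ∀ (c : ℕ) (A : FmlA), (c, A) ∈ CS → ∀ n : ℕ,
      E ω (bangIterA (n + 1) (TmA.const c)) ⊆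
        {υ | V υ (anFmlA (TmA.const c) A n)}

namespace CompletenessAux

variable (fl : FlagsA) (CS : Set (ℕ × FmlA))

/-- Derivability from a set of hypotheses. -/
inductive DF (Γ : Set FmlA) : FmlA → Prop
  | hyp {A : FmlA} : A ∈ Γ → DF Γ A
  | ax {A : FmlA} : AAxiom fl A → DF Γ A
  | mp {A B : FmlA} : DF Γ (A.imp B) → DF Γ A → DF Γ B
  | an {c : ℕ} {A : FmlA} (n : ℕ) (h : (c, A) ∈ CS) :
      DF Γ (anFmlA (TmA.const c) A n)

variable {fl CS}

theorem DF.mono {Γ Δ : Set FmlA} (hΓΔ : Γ ⊆ Δ) {A : FmlA}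
    (h : DF fl CS Γ A) : DF fl CS Δ A := by
  induction h with
  | hyp h => exact DF.hyp (hΓΔ h)
  | ax h => exact DF.ax h
  | mp _ _ ih1 ih2 => exact DF.mp ih1 ih2
  | an n h => exact DF.an n h

theorem df_of_deriv {Γ : Set FmlA} {A : FmlA} (h : DerivA fl CS A) :
    DF fl CS Γ A := by
  induction h with
  | ax h => exact DF.ax h
  | mp _ _ ih1 ih2 => exact DF.mp ih1 ih2
  | an n h => exact DF.an n h

theorem deriv_of_df {A : FmlA} (h : DF fl CS ∅ A) : DerivA fl CS A := by
  induction h with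
  | hyp h => exact absurd h (Set.notMem_empty _)
  | ax h => exact DerivA.ax h
  | mp _ _ ih1 ih2 => exact DerivA.mp ih1 ih2
  | an n h => exact DerivA.an n h

theorem df_id (Γ : Set FmlA) (A : FmlA) : DF fl CS Γ (A.imp A) := by
  have h1 : DF fl CS Γ ((A.imp ((A.imp A).imp A)).imp
      ((A.imp (A.imp A)).imp (A.imp A))) := DF.ax (AAxiom.cl2 A (A.imp A) A)
  exact (h1.mp (DF.ax (AAxiom.cl1 A (A.imp A)))).mp (DF.ax (AAxiom.cl1 A A))

/-- Deduction theorem. -/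
theorem deduction {Γ : Set FmlA} {A B : FmlA}
    (h : DF fl CS (insert A Γ) B) : DF fl CS Γ (A.imp B) := by
  induction h with
  | @hyp C h =>
    rcases h with h | h
    · subst h; exact df_id Γ _
    · exact (DF.ax (AAxiom.cl1 C A)).mp (DF.hyp h)
  | @ax C h => exact (DF.ax (AAxiom.cl1 C A)).mp (DF.ax h)
  | @mp C D _ _ ih1 ih2 =>
    exact ((DF.ax (AAxiom.cl2 A C D)).mp ih1).mp ih2
  | @an c C n h =>
    exact (DF.ax (AAxiom.cl1 _ A)).mp (DF.an n h)

theorem df_bot_elim (Γ : Set FmlA) (A : FmlA) :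
    DF fl CS Γ (FmlA.bot.imp A) := by
  apply deduction
  have h1 : DF fl CS (insert FmlA.bot Γ) A.neg.neg :=
    (DF.ax (AAxiom.cl1 FmlA.bot A.neg)).mp (DF.hyp (Set.mem_insert _ _))
  exact (DF.ax (AAxiom.cl3 A)).mp h1

theorem df_neg_imp (Γ : Set FmlA) (A B : FmlA) :
    DF fl CS Γ (A.neg.imp (A.imp B)) := by
  apply deduction; apply deduction
  have hb : DF fl CS (insert A (insert A.neg Γ)) FmlA.bot :=
    (DF.hyp (Set.mem_insert_of_mem _ (Set.mem_insert _ _))).mp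
      (DF.hyp (Set.mem_insert _ _))
  exact (df_bot_elim _ B).mp hb

theorem df_or_inl (Γ : Set FmlA) (A B : FmlA) :
    DF fl CS Γ (A.imp (A.or' B)) := by
  apply deduction; apply deduction
  have hb : DF fl CS (insert A.neg (insert A Γ)) FmlA.bot :=
    (DF.hyp (Set.mem_insert _ _)).mp
      (DF.hyp (Set.mem_insert_of_mem _ (Set.mem_insert _ _)))
  exact (df_bot_elim _ B).mp hb

/-- Consistency. -/
def Consistent (fl : FlagsA) (CS : Set (ℕ × FmlA)) (Γ : Set FmlA) : Prop :=
  ¬ DF fl CS Γ FmlA.bot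

/-- Maximal consistent sets. -/
def MCS (fl : FlagsA) (CS : Set (ℕ × FmlA)) (Γ : Set FmlA) : Prop :=
  Consistent fl CS Γ ∧ ∀ F : FmlA, F ∉ Γ → ¬ Consistent fl CS (insert F Γ)

theorem MCS.closed {Γ : Set FmlA} (hΓ : MCS fl CS Γ) {A : FmlA}
    (h : DF fl CS Γ A) : A ∈ Γ := by
  by_contra hA
  have h1 : DF fl CS (insert A Γ) FmlA.bot := by
    by_contra h2; exact hΓ.2 A hA h2
  exact hΓ.1 ((deduction h1).mp h)

theorem MCS.neg_mem {Γ : Set FmlA} (hΓ : MCS fl CS Γ) {A : FmlA}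
    (h : A ∉ Γ) : A.neg ∈ Γ := by
  apply hΓ.closed
  have h1 : DF fl CS (insert A Γ) FmlA.bot := by
    by_contra h2; exact hΓ.2 A h h2
  exact deduction h1

theorem MCS.imp_mem {Γ : Set FmlA} (hΓ : MCS fl CS Γ) (A B : FmlA) :
    A.imp B ∈ Γ ↔ (A ∉ Γ ∨ B ∈ Γ) := by
  constructor
  · intro h
    by_cases hA : A ∈ Γ
    · exact Or.inr (hΓ.closed ((DF.hyp h).mp (DF.hyp hA)))
    · exact Or.inl hA
  · rintro (h | h)
    · exact hΓ.closed ((df_neg_imp Γ A B).mp (DF.hyp (hΓ.neg_mem h)))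
    · exact hΓ.closed ((DF.ax (AAxiom.cl1 B A)).mp (DF.hyp h))

/-- Compactness of `DF`. -/
theorem df_compact {Γ : Set FmlA} {A : FmlA} (h : DF fl CS Γ A) :
    ∃ L : List FmlA, (∀ x ∈ L, x ∈ Γ) ∧ DF fl CS {x | x ∈ L} A := by
  induction h with
  | @hyp C h =>
    exact ⟨[C], by simpa using h, DF.hyp (by simp)⟩
  | ax h => exact ⟨[], by simp, DF.ax h⟩
  | @mp C D _ _ ih1 ih2 =>
    obtain ⟨L1, hL1, hd1⟩ := ih1
    obtain ⟨L2, hL2, hd2⟩ := ih2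
    refine ⟨L1 ++ L2, ?_, ?_⟩
    · intro x hx; rcases List.mem_append.mp hx with hx | hx
      · exact hL1 x hx
      · exact hL2 x hx
    · exact (hd1.mono (fun x hx => List.mem_append.mpr (Or.inl hx))).mp
        (hd2.mono (fun x hx => List.mem_append.mpr (Or.inr hx)))
  | an n h => exact ⟨[], by simp, DF.an n h⟩

/-- Iterated implication: `chainImp [A1,…,An] B = An → … → A1 → B`
(built so that induction matches the deduction theorem). -/
def chainImp : List FmlA → FmlA → FmlA
  | [], B => B
  | A :: L, B => chainImp L (A.imp B)

theorem chain_deduction : ∀ (L : List FmlA) (B : FmlA),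
    DF fl CS {x | x ∈ L} B → DerivA fl CS (chainImp L B)
  | [], B, h => deriv_of_df (by simpa [chainImp] using h)
  | A :: L, B, h => by
    have h1 : DF fl CS (insert A {x | x ∈ L}) B := by
      apply h.mono; intro x hx; simp at hx; simpa using hx
    exact chain_deduction L (A.imp B) (deduction h1)

/-- Internalization / lifting lemma. -/
theorem lift (hApp : AxAppropriateA fl CS) {A : FmlA}
    (h : DerivA fl CS A) : ∃ s : TmA, DerivA fl CS (FmlA.just s A) := by
  induction h with
  | @ax A hA =>
    obtain ⟨c, hc⟩ := hApp A hA
    exact ⟨TmA.const c, DerivA.an 0 hc⟩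
  | @mp A B _ _ ih1 ih2 =>
    obtain ⟨s, hs⟩ := ih1
    obtain ⟨t, ht⟩ := ih2
    exact ⟨s.app t, ((DerivA.ax (AAxiom.j s t A B)).mp hs).mp ht⟩
  | @an c A n h =>
    exact ⟨bangIterA (n + 1) (TmA.const c), DerivA.an (n + 1) h⟩

/-- Apply a justified chain of implications to hypotheses justified by `t`. -/
theorem apply_chain {Γ : Set FmlA} {t : TmA} :
    ∀ (L : List FmlA) (B : FmlA) (s : TmA),
    DerivA fl CS (FmlA.just s (chainImp L B)) →
    (∀ a ∈ L, FmlA.just t a ∈ Γ) →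
    ∃ r : TmA, DF fl CS Γ (FmlA.just r B)
  | [], B, s, hs, _ => ⟨s, df_of_deriv hs⟩
  | A :: L, B, s, hs, hmem => by
    obtain ⟨r, hr⟩ := apply_chain L (A.imp B) s hs
      (fun a ha => hmem a (List.mem_cons_of_mem _ ha))
    exact ⟨r.app t, ((DF.ax (AAxiom.j r t A B)).mp hr).mp
      (DF.hyp (hmem A List.mem_cons_self))⟩

/-- Lindenbaum lemma. -/
theorem lindenbaum {Γ : Set FmlA} (hΓ : Consistent fl CS Γ) :
    ∃ Δ : Set FmlA, Γ ⊆ Δ ∧ MCS fl CS Δ := by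
  have hzorn : ∀ c ⊆ {S : Set FmlA | Consistent fl CS S},
      IsChain (· ⊆ ·) c → c.Nonempty →
      ∃ ub ∈ {S : Set FmlA | Consistent fl CS S}, ∀ s ∈ c, s ⊆ ub := by
    intro c hc hchain hne
    refine ⟨⋃₀ c, ?_, fun s hs => Set.subset_sUnion_of_mem hs⟩
    intro hbot
    obtain ⟨L, hL, hd⟩ := df_compact hbot
    -- find a single member of the chain containing L
    have key : ∀ L' : List FmlA, (∀ x ∈ L', x ∈ ⋃₀ c) →
        ∃ m ∈ c, ∀ x ∈ L', x ∈ m := by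
      intro L'
      induction L' with
      | nil => intro _; obtain ⟨m, hm⟩ := hne; exact ⟨m, hm, by simp⟩
      | cons a L' ih =>
        intro hmem
        obtain ⟨m, hmc, hm⟩ := ih (fun x hx => hmem x (List.mem_cons_of_mem _ hx))
        obtain ⟨m', hm'c, ham'⟩ := hmem a List.mem_cons_self
        rcases hchain.total hmc hm'c with hsub | hsub
        · exact ⟨m', hm'c, by
            intro x hx
            rcases List.mem_cons.mp hx with rfl | hx
            · exact ham'
            · exact hsub (hm x hx)⟩
        · exact ⟨m, hmc, by
            intro x hx
            rcases List.mem_cons.mp hx with rfl | hx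
            · exact hsub ham'
            · exact hm x hx⟩
    obtain ⟨m, hmc, hm⟩ := key L hL
    exact hc hmc (hd.mono (fun x hx => hm x hx))
  obtain ⟨Δ, hsub, hmax⟩ := zorn_subset_nonempty
    {S : Set FmlA | Consistent fl CS S} hzorn Γ hΓ
  refine ⟨Δ, hsub, hmax.prop, ?_⟩
  intro F hF hcon
  have heq := hmax.eq_of_subset hcon (Set.subset_insert F Δ)
  exact hF (heq ▸ Set.mem_insert F Δ)

end CompletenessAux

open CompletenessAux in
/-- **Completeness of `L^A_CS` with respect to subset models**: if `CS` is
axiomatically appropriate in case `jd ∈ L^A`, then any formula true at all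
normal worlds of all `L^A_CS`-subset models is derivable. -/
theorem completenessA (fl : FlagsA) (CS : Set (ℕ × FmlA)) (hCS : IsCSA fl CS)
    (hApp : fl.jd = true → AxAppropriateA fl CS) (F : FmlA)
    (h : ∀ (W : Type) (M : AModel fl CS W), ∀ Γ ∈ M.W0, M.V Γ F) :
    DerivA fl CS F := by
  by_contra hF
  -- {¬F} is consistent
  have hcon : Consistent fl CS {F.neg} := by
    intro hbot
    have h1 : DF fl CS ∅ F.neg.neg := deduction (by
      apply hbot.mono; intro x hx; simpa using hx)
    exact hF (deriv_of_df ((DF.ax (AAxiom.cl3 F)).mp h1))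
  obtain ⟨Γ, hΓsub, hΓ⟩ := lindenbaum hcon
  -- canonical model
  set M : AModel fl CS (Set FmlA) :=
    { W0 := {Δ | MCS fl CS Δ}
      V := fun ω G => G ∈ ω
      E := fun ω t => {υ | ∀ G : FmlA, FmlA.just t G ∈ ω → G ∈ υ}
      w0_nonempty := ⟨Γ, hΓ⟩
      v_bot := fun ω hω hbot => hω.1 (DF.hyp hbot)
      v_imp := fun ω hω A B => by
        simpa using hω.imp_mem A B
      v_just := fun ω hω t G => by
        constructor
        · intro hmem υ hυ; exact hυ G hmem
        · intro hsub
          exact hsub (fun G' hG' => hG')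
      e_plus := fun ω hω s t υ hυ => by
        constructor
        · intro G hG
          refine hυ G (hω.closed ?_)
          exact (DF.ax (AAxiom.jplus s t G)).mp
            ((df_or_inl _ _ _).mp (DF.hyp hG))
        · intro G hG
          refine hυ G (hω.closed ?_)
          exact (DF.ax (AAxiom.jplus s t G)).mp
            ((DF.ax (AAxiom.cl1 (FmlA.just t G) (FmlA.just s G).neg)).mp
              (DF.hyp hG))
      e_app := fun ω hω s t υ hυ G hG => by
        obtain ⟨H, hs, ht⟩ := hG
        have hsH : FmlA.just s (H.imp G) ∈ ω := hs (fun G' hG' => hG')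
        have htH : FmlA.just t H ∈ ω := ht (fun G' hG' => hG')
        refine hυ G (hω.closed ?_)
        exact ((DF.ax (AAxiom.j s t H G)).mp (DF.hyp hsH)).mp (DF.hyp htH)
      e_jd := fun hjd ω hω t => by
        have hconm : Consistent fl CS {G | FmlA.just t G ∈ ω} := by
          intro hbot
          obtain ⟨L, hL, hd⟩ := df_compact hbot
          have hch : DerivA fl CS (chainImp L FmlA.bot) := chain_deduction L _ hd
          obtain ⟨s, hs⟩ := lift (hApp hjd) hch
          obtain ⟨r, hr⟩ := apply_chain L FmlA.bot s hs hL
          exact hω.1 ((DF.ax (AAxiom.jd r hjd)).mp hr)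
        obtain ⟨Δ, hΔsub, hΔ⟩ := lindenbaum hconm
        exact ⟨Δ, hΔ, fun G hG => hΔsub hG⟩
      e_jt := fun hjt ω hω t G hG =>
        hω.closed ((DF.ax (AAxiom.jt t G hjt)).mp (DF.hyp hG))
      e_j4 := fun hj4 ω hω t υ hυ G hG =>
        hυ (FmlA.just t G) (hω.closed
          ((DF.ax (AAxiom.j4 t G hj4)).mp (DF.hyp hG)))
      e_cs := fun ω hω c A hcA υ hυ =>
        hυ A (hω.closed (DF.an 0 hcA))
      e_cs_bang := fun ω hω c A hcA n υ hυ =>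
        hυ (anFmlA (TmA.const c) A n) (hω.closed (DF.an (n + 1) hcA)) }
  have hFΓ : F ∈ Γ := h (Set FmlA) M Γ hΓ
  have hnegF : F.neg ∈ Γ := hΓsub rfl
  exact hΓ.1 ((DF.hyp hnegF).mp (DF.hyp hFΓ))
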